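/- For every natural number n, the number of permutations of length n avoiding the pattern 231 equals the n-th Catalan number. -/

import Mathlib

/-- A permutation `π` of length `n` contains the pattern `p` (a length-`k`
sequence of distinct values, given by its values) if there is a strictly
increasing choice of `k` indices on which `π` is order isomorphic to `p`. -/
def PermContains {n k : ℕ} (π : Equiv.Perm (Fin n)) (p : Fin k → ℕ) : Prop :=
  ∃ f : Fin k → Fin n, StrictMono f ∧ ∀ a b : Fin k, p a < p b ↔ π (f a) < π (f b)

/-- `π` avoids the pattern `p`. -/
def PermAvoids {n k : ℕ} (π : Equiv.Perm (Fin n)) (p : Fin k → ℕ) : Prop :=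
  ¬ PermContains π p

lemma pat_eq : ∀ m : Fin 3, (![2, 3, 1] : Fin 3 → ℕ) m =
    if (m : ℕ) = 0 then 2 else if (m : ℕ) = 1 then 3 else 1 := by decide

lemma permContains_iff {n : ℕ} (π : Equiv.Perm (Fin n)) :
    PermContains π ![2, 3, 1] ↔
      ∃ i j k : Fin n, i < j ∧ j < k ∧ π k < π i ∧ π i < π j := by
  constructor
  · rintro ⟨f, hf, hp⟩
    refine ⟨f 0, f 1, f 2, hf (by decide), hf (by decide), ?_, ?_⟩
    · exact (hp 2 0).mp (by decide)
    · exact (hp 0 1).mp (by norm_num)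
  · rintro ⟨i, j, k, hij, hjk, h1, h2⟩
    refine ⟨fun a => if (a : ℕ) = 0 then i else if (a : ℕ) = 1 then j else k, ?_, ?_⟩
    · rintro ⟨a, ha⟩ ⟨b, hb⟩ hab
      simp only [Fin.lt_def] at hab h1 h2 hij hjk ⊢
      interval_cases a <;> interval_cases b <;> simp <;> omega
    · rintro ⟨a, ha⟩ ⟨b, hb⟩
      simp only [pat_eq, Fin.lt_def] at h1 h2 hij hjk ⊢
      interval_cases a <;> interval_cases b <;> simp <;> omega

section Build

variable (n M : ℕ) (σ : Equiv.Perm (Fin M)) (τ : Equiv.Perm (Fin (n - M)))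

/-- Forward map: `σ` on indices `< M` (values `< M`), the value `n` at index `M`,
and `τ` (shifted) on indices `> M` (values in `[M, n)`). -/
def bF (hM : M ≤ n) : Fin (n + 1) → Fin (n + 1) := fun i =>
  if h : (i : ℕ) < M then ⟨σ ⟨i, h⟩, by have := (σ ⟨i, h⟩).isLt; omega⟩
  else if h2 : (i : ℕ) = M then ⟨n, by omega⟩
  else ⟨M + τ ⟨(i : ℕ) - (M + 1), by have := i.isLt; omega⟩,
    by have := (τ ⟨(i : ℕ) - (M + 1), by have := i.isLt; omega⟩).isLt; omega⟩

/-- Inverse map. -/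
def bG (hM : M ≤ n) : Fin (n + 1) → Fin (n + 1) := fun v =>
  if h : (v : ℕ) < M then ⟨σ.symm ⟨v, h⟩, by have := (σ.symm ⟨v, h⟩).isLt; omega⟩
  else if h2 : (v : ℕ) = n then ⟨M, by omega⟩
  else ⟨M + 1 + τ.symm ⟨(v : ℕ) - M, by have := v.isLt; omega⟩,
    by have := (τ.symm ⟨(v : ℕ) - M, by have := v.isLt; omega⟩).isLt; omega⟩

lemma bF_lt (hM : M ≤ n) {i : Fin (n + 1)} (h : (i : ℕ) < M) :
    (bF n M σ τ hM i : ℕ) = σ ⟨i, h⟩ := by rw [bF, dif_pos h]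

lemma bF_eq (hM : M ≤ n) {i : Fin (n + 1)} (h : (i : ℕ) = M) :
    (bF n M σ τ hM i : ℕ) = n := by rw [bF, dif_neg (by omega), dif_pos h]

lemma bF_gt (hM : M ≤ n) {i : Fin (n + 1)} (h : M < (i : ℕ)) :
    (bF n M σ τ hM i : ℕ) =
      M + τ ⟨(i : ℕ) - (M + 1), by have := i.isLt; omega⟩ := by
  rw [bF, dif_neg (by omega), dif_neg (by omega)]

lemma bG_lt (hM : M ≤ n) {v : Fin (n + 1)} (h : (v : ℕ) < M) :
    (bG n M σ τ hM v : ℕ) = σ.symm ⟨v, h⟩ := by rw [bG, dif_pos h]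

lemma bG_top (hM : M ≤ n) {v : Fin (n + 1)} (h : (v : ℕ) = n) :
    (bG n M σ τ hM v : ℕ) = M := by rw [bG, dif_neg (by omega), dif_pos h]

lemma bG_mid (hM : M ≤ n) {v : Fin (n + 1)} (h1 : M ≤ (v : ℕ)) (h2 : (v : ℕ) < n) :
    (bG n M σ τ hM v : ℕ) =
      M + 1 + τ.symm ⟨(v : ℕ) - M, by have := v.isLt; omega⟩ := by
  rw [bG, dif_neg (by omega), dif_neg (by omega)]

/-- Glue `σ`, the maximum at position `M`, and `τ` into a permutation. -/
def buildPerm (hM : M ≤ n) : Equiv.Perm (Fin (n + 1)) where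
  toFun := bF n M σ τ hM
  invFun := bG n M σ τ hM
  left_inv := by
    intro i
    apply Fin.ext
    by_cases h : (i : ℕ) < M
    · have hv : (bF n M σ τ hM i : ℕ) < M := by
        rw [bF_lt n M σ τ hM h]; exact (σ ⟨i, h⟩).isLt
      rw [bG_lt n M σ τ hM hv]
      have : (⟨(bF n M σ τ hM i : ℕ), hv⟩ : Fin M) = σ ⟨i, h⟩ :=
        Fin.ext (bF_lt n M σ τ hM h)
      rw [this, Equiv.symm_apply_apply]
    · by_cases h2 : (i : ℕ) = M
      · have hv : (bF n M σ τ hM i : ℕ) = n := bF_eq n M σ τ hM h2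
        rw [bG_top n M σ τ hM hv, h2]
      · have h3 : M < (i : ℕ) := by omega
        have hτ := (τ ⟨(i : ℕ) - (M + 1), by have := i.isLt; omega⟩).isLt
        have hv := bF_gt n M σ τ hM h3
        have hv1 : M ≤ (bF n M σ τ hM i : ℕ) := by omega
        have hv2 : (bF n M σ τ hM i : ℕ) < n := by omega
        rw [bG_mid n M σ τ hM hv1 hv2]
        have : (⟨(bF n M σ τ hM i : ℕ) - M, by have := (bF n M σ τ hM i).isLt; omega⟩ :
            Fin (n - M)) = τ ⟨(i : ℕ) - (M + 1), by have := i.isLt; omega⟩ :=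
          Fin.ext (by simp only [hv]; omega)
        rw [this, Equiv.symm_apply_apply]
        simp only [Fin.val_mk]
        have := i.isLt; omega
  right_inv := by
    intro v
    apply Fin.ext
    by_cases h : (v : ℕ) < M
    · have hi : (bG n M σ τ hM v : ℕ) < M := by
        rw [bG_lt n M σ τ hM h]; exact (σ.symm ⟨v, h⟩).isLt
      rw [bF_lt n M σ τ hM hi]
      have : (⟨(bG n M σ τ hM v : ℕ), hi⟩ : Fin M) = σ.symm ⟨v, h⟩ :=
        Fin.ext (bG_lt n M σ τ hM h)
      rw [this, Equiv.apply_symm_apply]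
    · by_cases h2 : (v : ℕ) = n
      · have hi : (bG n M σ τ hM v : ℕ) = M := bG_top n M σ τ hM h2
        rw [bF_eq n M σ τ hM hi, h2]
      · have h3 : M ≤ (v : ℕ) := by omega
        have h4 : (v : ℕ) < n := by have := v.isLt; omega
        have hτ := (τ.symm ⟨(v : ℕ) - M, by have := v.isLt; omega⟩).isLt
        have hi := bG_mid n M σ τ hM h3 h4
        have hi2 : M < (bG n M σ τ hM v : ℕ) := by omega
        rw [bF_gt n M σ τ hM hi2]
        have : (⟨(bG n M σ τ hM v : ℕ) - (M + 1), by
            have := (bG n M σ τ hM v).isLt; omega⟩ : Fin (n - M)) =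
            τ.symm ⟨(v : ℕ) - M, by have := v.isLt; omega⟩ :=
          Fin.ext (by simp only [hi]; omega)
        rw [this, Equiv.apply_symm_apply]
        simp only [Fin.val_mk]
        omega

lemma buildPerm_lt (hM : M ≤ n) {i : Fin (n + 1)} (h : (i : ℕ) < M) :
    (buildPerm n M σ τ hM i : ℕ) = σ ⟨i, h⟩ := bF_lt n M σ τ hM h

lemma buildPerm_eq (hM : M ≤ n) {i : Fin (n + 1)} (h : (i : ℕ) = M) :
    (buildPerm n M σ τ hM i : ℕ) = n := bF_eq n M σ τ hM h

lemma buildPerm_gt (hM : M ≤ n) {i : Fin (n + 1)} (h : M < (i : ℕ)) :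
    (buildPerm n M σ τ hM i : ℕ) =
      M + τ ⟨(i : ℕ) - (M + 1), by have := i.isLt; omega⟩ := bF_gt n M σ τ hM h

end Build

section Avoid

variable (n M : ℕ) (σ : Equiv.Perm (Fin M)) (τ : Equiv.Perm (Fin (n - M)))

lemma contains_left (hM : M ≤ n) (h : PermContains σ ![2, 3, 1]) :
    PermContains (buildPerm n M σ τ hM) ![2, 3, 1] := by
  rw [permContains_iff] at h ⊢
  obtain ⟨i, j, k, hij, hjk, h1, h2⟩ := h
  simp only [Fin.lt_def] at hij hjk h1 h2
  have emb : ∀ x : Fin M,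
      ((buildPerm n M σ τ hM) ⟨(x : ℕ), by have := x.isLt; omega⟩ : ℕ) = σ x := by
    intro x
    rw [buildPerm_lt n M σ τ hM (show ((⟨(x : ℕ), by have := x.isLt; omega⟩ :
      Fin (n + 1)) : ℕ) < M from x.isLt)]
  have ei := emb i
  have ej := emb j
  have ek := emb k
  refine ⟨⟨(i : ℕ), by have := i.isLt; omega⟩, ⟨(j : ℕ), by have := j.isLt; omega⟩,
    ⟨(k : ℕ), by have := k.isLt; omega⟩, ?_, ?_, ?_, ?_⟩ <;>
    simp only [Fin.lt_def, Fin.val_mk] <;> omega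

lemma contains_right (hM : M ≤ n) (h : PermContains τ ![2, 3, 1]) :
    PermContains (buildPerm n M σ τ hM) ![2, 3, 1] := by
  rw [permContains_iff] at h ⊢
  obtain ⟨i, j, k, hij, hjk, h1, h2⟩ := h
  simp only [Fin.lt_def] at hij hjk h1 h2
  have emb : ∀ x : Fin (n - M),
      ((buildPerm n M σ τ hM) ⟨M + 1 + (x : ℕ), by have := x.isLt; omega⟩ : ℕ)
        = M + τ x := by
    intro x
    rw [buildPerm_gt n M σ τ hM (show M < ((⟨M + 1 + (x : ℕ), by have := x.isLt; omega⟩ :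
      Fin (n + 1)) : ℕ) by simp only [Fin.val_mk]; omega)]
    have : (⟨((⟨M + 1 + (x : ℕ), by have := x.isLt; omega⟩ : Fin (n + 1)) : ℕ) - (M + 1), by
        have := x.isLt; simp only [Fin.val_mk]; omega⟩ : Fin (n - M)) = x :=
      Fin.ext (by simp only [Fin.val_mk]; omega)
    rw [this]
  have ei := emb i
  have ej := emb j
  have ek := emb k
  refine ⟨⟨M + 1 + (i : ℕ), by have := i.isLt; omega⟩,
    ⟨M + 1 + (j : ℕ), by have := j.isLt; omega⟩,
    ⟨M + 1 + (k : ℕ), by have := k.isLt; omega⟩, ?_, ?_, ?_, ?_⟩ <;>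
    simp only [Fin.lt_def, Fin.val_mk] <;> omega

lemma contains_build (hM : M ≤ n) (h : PermContains (buildPerm n M σ τ hM) ![2, 3, 1]) :
    PermContains σ ![2, 3, 1] ∨ PermContains τ ![2, 3, 1] := by
  rw [permContains_iff] at h
  obtain ⟨i, j, k, hij, hjk, h1, h2⟩ := h
  simp only [Fin.lt_def] at hij hjk h1 h2
  rcases lt_trichotomy ((k : ℕ)) M with hk | hk | hk
  · -- all indices < M : pattern in σ
    left
    rw [permContains_iff]
    have hi : (i : ℕ) < M := by omega
    have hj : (j : ℕ) < M := by omega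
    have ei := buildPerm_lt n M σ τ hM hi
    have ej := buildPerm_lt n M σ τ hM hj
    have ek := buildPerm_lt n M σ τ hM hk
    exact ⟨⟨i, hi⟩, ⟨j, hj⟩, ⟨k, hk⟩, Fin.mk_lt_mk.mpr hij, Fin.mk_lt_mk.mpr hjk,
      by rw [Fin.lt_def]; omega, by rw [Fin.lt_def]; omega⟩
  · -- k = M impossible: π k = n is maximal
    exfalso
    have ek := buildPerm_eq n M σ τ hM hk
    have := ((buildPerm n M σ τ hM) i).isLt
    omega
  · -- all indices > M : pattern in τ
    right
    have ek := buildPerm_gt n M σ τ hM hk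
    have hτk := (τ ⟨(k : ℕ) - (M + 1), by have := k.isLt; omega⟩).isLt
    have hi : M < (i : ℕ) := by
      rcases lt_trichotomy ((i : ℕ)) M with hi | hi | hi
      · have := buildPerm_lt n M σ τ hM hi
        have := (σ ⟨(i : ℕ), hi⟩).isLt
        omega
      · have := buildPerm_eq n M σ τ hM hi
        have := ((buildPerm n M σ τ hM) j).isLt
        omega
      · exact hi
    have hj : M < (j : ℕ) := by omega
    have ei := buildPerm_gt n M σ τ hM hi
    have ej := buildPerm_gt n M σ τ hM hj
    rw [permContains_iff]
    refine ⟨⟨(i : ℕ) - (M + 1), by have := i.isLt; omega⟩,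
      ⟨(j : ℕ) - (M + 1), by have := j.isLt; omega⟩,
      ⟨(k : ℕ) - (M + 1), by have := k.isLt; omega⟩,
      Fin.mk_lt_mk.mpr (by omega), Fin.mk_lt_mk.mpr (by omega), ?_, ?_⟩ <;>
      rw [Fin.lt_def] <;> omega

lemma buildPerm_avoids_iff (hM : M ≤ n) :
    PermAvoids (buildPerm n M σ τ hM) ![2, 3, 1] ↔
      PermAvoids σ ![2, 3, 1] ∧ PermAvoids τ ![2, 3, 1] := by
  unfold PermAvoids
  constructor
  · intro h
    exact ⟨fun hσ => h (contains_left n M σ τ hM hσ),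
      fun hτ => h (contains_right n M σ τ hM hτ)⟩
  · rintro ⟨hσ, hτ⟩ h
    rcases contains_build n M σ τ hM h with h' | h'
    · exact hσ h'
    · exact hτ h'

end Avoid

section Decompose

variable {n : ℕ} (π : Equiv.Perm (Fin (n + 1)))

/-- Restriction of `π` to the initial block, assuming it preserves it. -/
def smallPart (M : ℕ) (hM : M ≤ n) (h : ∀ i : Fin (n + 1), (i : ℕ) < M → (π i : ℕ) < M) :
    Fin M → Fin M :=
  fun x => ⟨(π ⟨(x : ℕ), by have := x.isLt; omega⟩ : Fin (n + 1)),
    h _ x.isLt⟩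

lemma smallPart_inj (M : ℕ) (hM : M ≤ n)
    (h : ∀ i : Fin (n + 1), (i : ℕ) < M → (π i : ℕ) < M) :
    Function.Injective (smallPart π M hM h) := by
  intro a b hab
  have h1 := congrArg Fin.val hab
  simp only [smallPart, Fin.val_mk] at h1
  have h2 := congrArg Fin.val (π.injective (Fin.ext h1))
  simp only [Fin.val_mk] at h2
  exact Fin.ext h2

lemma smallPart_val (M : ℕ) (hM : M ≤ n)
    (h : ∀ i : Fin (n + 1), (i : ℕ) < M → (π i : ℕ) < M) (x : Fin M) :
    (smallPart π M hM h x : ℕ) = (π ⟨(x : ℕ), by have := x.isLt; omega⟩ : Fin (n + 1)) :=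
  rfl

/-- Restriction of `π` to the terminal block (shifted), assuming bounds. -/
def largePart (M : ℕ) (hM : M ≤ n)
    (h : ∀ k : Fin (n + 1), M < (k : ℕ) → M ≤ (π k : ℕ) ∧ (π k : ℕ) < n) :
    Fin (n - M) → Fin (n - M) :=
  fun x => ⟨(π ⟨M + 1 + (x : ℕ), by have := x.isLt; omega⟩ : Fin (n + 1)) - M, by
    have hb := h ⟨M + 1 + (x : ℕ), by have := x.isLt; omega⟩
      (by simp only [Fin.val_mk]; omega)
    omega⟩

lemma largePart_inj (M : ℕ) (hM : M ≤ n)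
    (h : ∀ k : Fin (n + 1), M < (k : ℕ) → M ≤ (π k : ℕ) ∧ (π k : ℕ) < n) :
    Function.Injective (largePart π M hM h) := by
  intro a b hab
  have ha := h ⟨M + 1 + (a : ℕ), by have := a.isLt; omega⟩ (by simp only [Fin.val_mk]; omega)
  have hb := h ⟨M + 1 + (b : ℕ), by have := b.isLt; omega⟩ (by simp only [Fin.val_mk]; omega)
  have h1 := congrArg Fin.val hab
  simp only [largePart, Fin.val_mk] at h1
  have h2 := congrArg Fin.val (π.injective (Fin.ext (show
      ((π ⟨M + 1 + (a : ℕ), by have := a.isLt; omega⟩ : Fin (n + 1)) : ℕ) =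
      ((π ⟨M + 1 + (b : ℕ), by have := b.isLt; omega⟩ : Fin (n + 1)) : ℕ) by omega)))
  simp only [Fin.val_mk] at h2
  exact Fin.ext (by omega)

lemma largePart_val (M : ℕ) (hM : M ≤ n)
    (h : ∀ k : Fin (n + 1), M < (k : ℕ) → M ≤ (π k : ℕ) ∧ (π k : ℕ) < n) (x : Fin (n - M)) :
    (largePart π M hM h x : ℕ)
      = (π ⟨M + 1 + (x : ℕ), by have := x.isLt; omega⟩ : Fin (n + 1)) - M :=
  rfl

/-- Indices used in the pigeonhole argument: `i` together with everything above `M`. -/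
def pigeonIdx (M : ℕ) (hM : M ≤ n) (i : Fin (n + 1)) : Fin (n - M + 1) → Fin (n + 1) :=
  fun j => if (j : ℕ) = 0 then i else ⟨M + (j : ℕ), by have := j.isLt; omega⟩

lemma pigeonIdx_inj (M : ℕ) (hM : M ≤ n) (i : Fin (n + 1)) (hi : (i : ℕ) < M) :
    Function.Injective (pigeonIdx M hM i) := by
  intro a b hab
  unfold pigeonIdx at hab
  split_ifs at hab with h1 h2 h2
  · exact Fin.ext (by omega)
  · exact absurd (congrArg Fin.val hab) (by simp only [Fin.val_mk]; omega)
  · exact absurd (congrArg Fin.val hab) (by simp only [Fin.val_mk]; omega)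
  · have := congrArg Fin.val hab
    simp only [Fin.val_mk] at this
    exact Fin.ext (by omega)

lemma exists_build (hπ : PermAvoids π ![2, 3, 1]) :
    ∃ (M : ℕ) (hM : M ≤ n) (σ : Equiv.Perm (Fin M)) (τ : Equiv.Perm (Fin (n - M))),
      buildPerm n M σ τ hM = π := by
  have hπM : π (π.symm (Fin.last n)) = Fin.last n := π.apply_symm_apply _
  set M : ℕ := ((π.symm (Fin.last n) : Fin (n + 1)) : ℕ) with hMdef
  have hM : M ≤ n := by have := (π.symm (Fin.last n)).isLt; omega
  -- any index other than the max position has value < n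
  have hmax : ∀ x : Fin (n + 1), (x : ℕ) ≠ M → (π x : ℕ) < n := by
    intro x hx
    have hne : π x ≠ Fin.last n := by
      intro e
      exact hx (congrArg Fin.val (π.injective (e.trans hπM.symm)))
    have h1 : (π x : ℕ) ≠ n := fun e => hne (Fin.ext (by simp [Fin.val_last, e]))
    have := (π x).isLt
    omega
  -- elements left of the max are smaller than elements right of the max
  have step1 : ∀ i k : Fin (n + 1), (i : ℕ) < M → M < (k : ℕ) → (π i : ℕ) < (π k : ℕ) := by
    intro i k hi hk
    by_contra hc
    push_neg at hc
    have hik : π k ≠ π i := fun e => by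
      have := congrArg Fin.val (π.injective e); omega
    have h1 : (π k : ℕ) < (π i : ℕ) := by
      rcases lt_or_eq_of_le hc with h | h
      · exact h
      · exact absurd (Fin.ext h) hik
    have h2 : (π i : ℕ) < (π (π.symm (Fin.last n)) : ℕ) := by
      rw [hπM]
      simp only [Fin.val_last]
      exact hmax i (by omega)
    apply hπ
    rw [permContains_iff]
    exact ⟨i, π.symm (Fin.last n), k, by rw [Fin.lt_def]; omega, by rw [Fin.lt_def]; omega,
      by rw [Fin.lt_def]; omega, by rw [Fin.lt_def]; omega⟩
  -- the initial block is preserved (pigeonhole)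
  have step2 : ∀ i : Fin (n + 1), (i : ℕ) < M → (π i : ℕ) < M := by
    intro i hi
    by_contra hc
    push_neg at hc
    have hvn : (π i : ℕ) < n := hmax i (by omega)
    have hbound : ∀ j : Fin (n - M + 1),
        (π i : ℕ) ≤ (π (pigeonIdx M hM i j) : ℕ) ∧ (π (pigeonIdx M hM i j) : ℕ) < n := by
      intro j
      by_cases h0 : (j : ℕ) = 0
      · have e : pigeonIdx M hM i j = i := if_pos h0
        rw [e]
        exact ⟨le_refl _, hvn⟩
      · have e : pigeonIdx M hM i j = ⟨M + (j : ℕ), by have := j.isLt; omega⟩ := if_neg h0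
        rw [e]
        constructor
        · exact le_of_lt (step1 i _ hi (by simp only [Fin.val_mk]; omega))
        · exact hmax _ (by simp only [Fin.val_mk]; omega)
    have hinj : Function.Injective (fun j : Fin (n - M + 1) =>
        (⟨(π (pigeonIdx M hM i j) : ℕ) - (π i : ℕ), by
          have := hbound j; omega⟩ : Fin (n - (π i : ℕ)))) := by
      intro a b hab
      have h1 := congrArg Fin.val hab
      simp only [Fin.val_mk] at h1
      have ha := hbound a
      have hb := hbound b
      have h2 := π.injective (Fin.ext (show
          ((π (pigeonIdx M hM i a)) : ℕ) = ((π (pigeonIdx M hM i b)) : ℕ) by omega))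
      exact pigeonIdx_inj M hM i hi h2
    have hcard := Fintype.card_le_of_injective _ hinj
    simp only [Fintype.card_fin] at hcard
    omega
  -- the terminal block takes values in [M, n)
  have step3 : ∀ k : Fin (n + 1), M < (k : ℕ) → M ≤ (π k : ℕ) ∧ (π k : ℕ) < n := by
    intro k hk
    refine ⟨?_, hmax k (by omega)⟩
    by_contra hc
    push_neg at hc
    obtain ⟨x, hx⟩ := (Finite.injective_iff_surjective.mp (smallPart_inj π M hM step2))
      ⟨(π k : ℕ), hc⟩
    have h1 := congrArg Fin.val hx
    rw [smallPart_val] at h1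
    simp only [Fin.val_mk] at h1
    have h2 := congrArg Fin.val (π.injective (Fin.ext h1))
    simp only [Fin.val_mk] at h2
    have := x.isLt
    omega
  refine ⟨M, hM,
    Equiv.ofBijective _ (Finite.injective_iff_bijective.mp (smallPart_inj π M hM step2)),
    Equiv.ofBijective _ (Finite.injective_iff_bijective.mp (largePart_inj π M hM step3)),
    ?_⟩
  apply Equiv.ext
  intro x
  apply Fin.ext
  rcases lt_trichotomy ((x : ℕ)) M with hx | hx | hx
  · rw [buildPerm_lt n M _ _ hM hx]
    have e1 : (Equiv.ofBijective _
        (Finite.injective_iff_bijective.mp (smallPart_inj π M hM step2)) ⟨(x : ℕ), hx⟩ : ℕ)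
        = (smallPart π M hM step2 ⟨(x : ℕ), hx⟩ : ℕ) := rfl
    rw [e1, smallPart_val]
  · rw [buildPerm_eq n M _ _ hM hx]
    have : x = π.symm (Fin.last n) := Fin.ext hx
    rw [this, hπM, Fin.val_last]
  · rw [buildPerm_gt n M _ _ hM hx]
    have e1 : (Equiv.ofBijective _
        (Finite.injective_iff_bijective.mp (largePart_inj π M hM step3))
          ⟨(x : ℕ) - (M + 1), by have := x.isLt; omega⟩ : ℕ)
        = (largePart π M hM step3 ⟨(x : ℕ) - (M + 1), by have := x.isLt; omega⟩ : ℕ) := rfl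
    rw [e1, largePart_val]
    have e2 : (⟨M + 1 + ((⟨(x : ℕ) - (M + 1), by have := x.isLt; omega⟩ : Fin (n - M)) : ℕ),
        by have := x.isLt; simp only [Fin.val_mk]; omega⟩ : Fin (n + 1)) = x :=
      Fin.ext (by simp only [Fin.val_mk]; omega)
    rw [e2]
    have := step3 x (by omega)
    omega

end Decompose

section Count

abbrev AvSet (n : ℕ) := {π : Equiv.Perm (Fin n) // PermAvoids π ![2, 3, 1]}

/-- The gluing map, packaged on avoiding permutations. -/
def buildMap (n : ℕ) : (Σ m : Fin (n + 1), AvSet (m : ℕ) × AvSet (n - (m : ℕ))) →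
    AvSet (n + 1) :=
  fun x => ⟨buildPerm n (x.1 : ℕ) x.2.1.1 x.2.2.1 (by have := x.1.isLt; omega),
    (buildPerm_avoids_iff n (x.1 : ℕ) x.2.1.1 x.2.2.1 (by have := x.1.isLt; omega)).mpr
      ⟨x.2.1.2, x.2.2.2⟩⟩

set_option maxHeartbeats 1000000 in
lemma buildMap_bijective (n : ℕ) : Function.Bijective (buildMap n) := by
  constructor
  · rintro ⟨mx, ⟨σx, hσx⟩, ⟨τx, hτx⟩⟩ ⟨my, ⟨σy, hσy⟩, ⟨τy, hτy⟩⟩ h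
    have h1 := congrArg Subtype.val h
    simp only [buildMap] at h1
    -- position of value n must agree
    have hm : (mx : ℕ) = (my : ℕ) := by
      have e1 : ((buildPerm n (mx : ℕ) σx τx (by have := mx.isLt; omega))
          ⟨(mx : ℕ), mx.isLt⟩ : ℕ) = n :=
        buildPerm_eq n (mx : ℕ) σx τx _ rfl
      have e2 := congrArg (fun (e : Equiv.Perm (Fin (n + 1))) =>
        ((e ⟨(mx : ℕ), mx.isLt⟩ : Fin (n + 1)) : ℕ)) h1
      rcases lt_trichotomy ((mx : ℕ)) ((my : ℕ)) with hlt | heq | hgt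
      · exfalso
        have e3 := buildPerm_lt n (my : ℕ) σy τy (by have := my.isLt; omega)
          (show ((⟨(mx : ℕ), mx.isLt⟩ : Fin (n + 1)) : ℕ) < (my : ℕ) from hlt)
        have := (σy ⟨(mx : ℕ), hlt⟩).isLt
        have := my.isLt
        omega
      · exact heq
      · exfalso
        have e3 := buildPerm_gt n (my : ℕ) σy τy (by have := my.isLt; omega)
          (show (my : ℕ) < ((⟨(mx : ℕ), mx.isLt⟩ : Fin (n + 1)) : ℕ) from hgt)
        have := (τy ⟨((⟨(mx : ℕ), mx.isLt⟩ : Fin (n + 1)) : ℕ) - ((my : ℕ) + 1),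
          by have := mx.isLt; simp only [Fin.val_mk]; omega⟩).isLt
        omega
    have hmm : mx = my := Fin.ext hm
    subst hmm
    -- the small parts agree
    have hσ : σx = σy := by
      apply Equiv.ext
      intro z
      apply Fin.ext
      have hz : ((z : ℕ)) < (mx : ℕ) := z.isLt
      have e1 := buildPerm_lt n (mx : ℕ) σx τx (by have := mx.isLt; omega)
        (show ((⟨(z : ℕ), by have := mx.isLt; omega⟩ : Fin (n + 1)) : ℕ) < (mx : ℕ) from hz)
      have e2 := buildPerm_lt n (mx : ℕ) σy τy (by have := mx.isLt; omega)
        (show ((⟨(z : ℕ), by have := mx.isLt; omega⟩ : Fin (n + 1)) : ℕ) < (mx : ℕ) from hz)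
      have e3 := congrArg (fun (e : Equiv.Perm (Fin (n + 1))) =>
        ((e ⟨(z : ℕ), by have := mx.isLt; omega⟩ : Fin (n + 1)) : ℕ)) h1
      simp only [Fin.eta] at e1 e2
      omega
    -- the large parts agree
    have hτ : τx = τy := by
      apply Equiv.ext
      intro z
      apply Fin.ext
      have hz : (mx : ℕ) < ((⟨(mx : ℕ) + 1 + (z : ℕ), by
          have := z.isLt; have := mx.isLt; omega⟩ : Fin (n + 1)) : ℕ) := by
        simp only [Fin.val_mk]; omega
      have e1 := buildPerm_gt n (mx : ℕ) σx τx (by have := mx.isLt; omega) hz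
      have e2 := buildPerm_gt n (mx : ℕ) σy τy (by have := mx.isLt; omega) hz
      have e3 := congrArg (fun (e : Equiv.Perm (Fin (n + 1))) =>
        ((e ⟨(mx : ℕ) + 1 + (z : ℕ), by have := z.isLt; have := mx.isLt; omega⟩ :
          Fin (n + 1)) : ℕ)) h1
      have e4 : (⟨((⟨(mx : ℕ) + 1 + (z : ℕ), by
          have := z.isLt; have := mx.isLt; omega⟩ : Fin (n + 1)) : ℕ) - ((mx : ℕ) + 1), by
          have := z.isLt; simp only [Fin.val_mk]; omega⟩ : Fin (n - (mx : ℕ))) = z :=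
        Fin.ext (by simp only [Fin.val_mk]; omega)
      have e5 := congrArg Fin.val (congrArg τx e4)
      have e6 := congrArg Fin.val (congrArg τy e4)
      omega
    subst hσ
    subst hτ
    rfl
  · rintro ⟨π, hπ⟩
    obtain ⟨M, hM, σ, τ, hb⟩ := exists_build π hπ
    have havoid : PermAvoids σ ![2, 3, 1] ∧ PermAvoids τ ![2, 3, 1] :=
      (buildPerm_avoids_iff n M σ τ hM).mp (by rw [hb]; exact hπ)
    exact ⟨⟨⟨M, by omega⟩, (⟨σ, havoid.1⟩, ⟨τ, havoid.2⟩)⟩, Subtype.ext hb⟩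

lemma card_avSet_succ (n : ℕ) : Nat.card (AvSet (n + 1)) =
    ∑ m : Fin (n + 1), Nat.card (AvSet (m : ℕ)) * Nat.card (AvSet (n - (m : ℕ))) := by
  classical
  rw [← Nat.card_congr (Equiv.ofBijective _ (buildMap_bijective n))]
  rw [Nat.card_eq_fintype_card, Fintype.card_sigma]
  congr 1
  funext m
  rw [Fintype.card_prod]
  rw [Nat.card_eq_fintype_card, Nat.card_eq_fintype_card]

lemma card_avSet_zero : Nat.card (AvSet 0) = 1 := by
  have hav : ∀ π : Equiv.Perm (Fin 0), PermAvoids π ![2, 3, 1] :=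
    fun π ⟨f, _, _⟩ => (f 0).elim0
  haveI : Nonempty (AvSet 0) := ⟨⟨1, hav 1⟩⟩
  haveI : Subsingleton (AvSet 0) := ⟨fun a b => Subtype.ext (Subsingleton.elim _ _)⟩
  exact Nat.card_unique

end Count

theorem av231_card_eq_catalan (n : ℕ) :
    Nat.card {π : Equiv.Perm (Fin n) // PermAvoids π ![2, 3, 1]} = catalan n := by
  induction n using Nat.strong_induction_on with
  | _ n ih =>
    match n with
    | 0 => simpa using card_avSet_zero
    | Nat.succ m =>
      rw [show Nat.card {π : Equiv.Perm (Fin (m + 1)) // PermAvoids π ![2, 3, 1]}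
          = Nat.card (AvSet (m + 1)) from rfl, card_avSet_succ, catalan_succ]
      refine Finset.sum_congr rfl fun i _ => ?_
      rw [ih (i : ℕ) (by have := i.isLt; omega), ih (m - (i : ℕ)) (by omega)]
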